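/- Let N be a normal subgroup of a finite group G and π a set of primes. Then ε_π(G/N) ≤ ε_π(G). If moreover N is a proper π-subgroup of G with C_G(N) ≤ N, then ε_π(G/N) < ε_π(G). -/

import Mathlib

/-- `n` is a `π`-number: every prime divisor of `n` lies in `π`. -/
def IsPiNumber (π : Finset ℕ) (n : ℕ) : Prop := ∀ p : ℕ, p.Prime → p ∣ n → p ∈ π

/-- `n` is a `π'`-number: no prime divisor of `n` lies in `π`. -/
def IsPiPrimeNumber (π : Finset ℕ) (n : ℕ) : Prop := ∀ p : ℕ, p.Prime → p ∣ n → p ∉ π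

/-- The `π`-exponent of `n`: the sum of the exponents of the primes of `π`
in the factorization of `n` (so `p₁^{k₁}⋯p_s^{k_s}` is the `π`-part of `n`
and the `π`-exponent is `k₁ + ⋯ + k_s`). -/
def piExp (π : Finset ℕ) (n : ℕ) : ℕ :=
  ∑ p ∈ n.primeFactors.filter (· ∈ π), n.factorization p

/-- `ε_π(G)`: the largest `π`-exponent of a conjugacy class size in `G`. -/
noncomputable def epsPi (π : Finset ℕ) (G : Type*) [Group G] : ℕ :=
  sSup {k | ∃ x : G, piExp π (Subgroup.centralizer {x}).index = k}

/-- A group is `π`-separable if it has a normal series each of whose factors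
is a `π`-group or a `π'`-group. -/
def PiSeparable (π : Finset ℕ) (G : Type*) [Group G] : Prop :=
  ∃ (n : ℕ) (H : ℕ → Subgroup G), H 0 = ⊥ ∧ H n = ⊤ ∧
    (∀ i, H i ≤ H (i + 1)) ∧ (∀ i, (H i).Normal) ∧
    ∀ i < n,
      IsPiNumber π (Nat.card (↥(H (i + 1)) ⧸ (H i).subgroupOf (H (i + 1)))) ∨
      IsPiPrimeNumber π (Nat.card (↥(H (i + 1)) ⧸ (H i).subgroupOf (H (i + 1))))

lemma piExp_eq_sum (π : Finset ℕ) (n : ℕ) : piExp π n = ∑ p ∈ π, n.factorization p := by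
  rw [piExp]
  refine Finset.sum_subset (fun p hp => (Finset.mem_filter.mp hp).2) (fun p hp hp' => ?_)
  by_contra h
  have hsupp : p ∈ n.factorization.support := Finsupp.mem_support_iff.mpr h
  rw [Nat.support_factorization] at hsupp
  exact hp' (Finset.mem_filter.mpr ⟨hsupp, hp⟩)

lemma piExp_mul (π : Finset ℕ) {m n : ℕ} (hm : m ≠ 0) (hn : n ≠ 0) :
    piExp π (m * n) = piExp π m + piExp π n := by
  simp only [piExp_eq_sum, Nat.factorization_mul hm hn, Finsupp.add_apply,
    Finset.sum_add_distrib]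

lemma piExp_le_of_dvd (π : Finset ℕ) {m n : ℕ} (h : m ∣ n) (hn : n ≠ 0) :
    piExp π m ≤ piExp π n := by
  have hm : m ≠ 0 := fun h0 => hn (by simpa [h0] using h)
  simp only [piExp_eq_sum]
  exact Finset.sum_le_sum fun p _ =>
    Finsupp.le_def.mp ((Nat.factorization_le_iff_dvd hm hn).mpr h) p

lemma one_le_piExp (π : Finset ℕ) {p n : ℕ} (hp : p.Prime) (hpπ : p ∈ π) (hpd : p ∣ n)
    (hn : n ≠ 0) : 1 ≤ piExp π n := by
  rw [piExp_eq_sum]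
  calc 1 ≤ n.factorization p := hp.factorization_pos_of_dvd hn hpd
    _ ≤ _ := Finset.single_le_sum (fun q _ => Nat.zero_le _) hpπ

open Subgroup in
/-- Key step: if `x` does not centralize the `π`-group `N`, then the `π`-exponent of its
class size in `G` exceeds that of its image in `G ⧸ N`. -/
lemma key_step {G : Type*} [Group G] [Finite G] (π : Finset ℕ) (N : Subgroup G) [N.Normal]
    (hπN : IsPiNumber π (Nat.card N)) {x : G} (hx : x ∉ Subgroup.centralizer (N : Set G)) :
    piExp π (Subgroup.centralizer {(x : G ⧸ N)}).index + 1 ≤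
      piExp π (Subgroup.centralizer {x}).index := by
  set C := Subgroup.centralizer {x} with hC
  set K := (Subgroup.centralizer {(x : G ⧸ N)}).comap (QuotientGroup.mk' N) with hK
  have hCK : C ≤ K := by
    intro g hg
    rw [hC, mem_centralizer_singleton_iff] at hg
    rw [hK, mem_comap, mem_centralizer_singleton_iff]
    have : ((g * x : G) : G ⧸ N) = ((x * g : G) : G ⧸ N) := by rw [hg]
    simpa using this
  have hNK : N ≤ K := by
    intro n hn
    rw [hK, mem_comap, mem_centralizer_singleton_iff]
    have : ((n : G) : G ⧸ N) = 1 := (QuotientGroup.eq_one_iff n).mpr hn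
    rw [QuotientGroup.mk'_apply, this, one_mul, mul_one]
  have hKind : K.index = (Subgroup.centralizer {(x : G ⧸ N)}).index :=
    Subgroup.index_comap_of_surjective _ (QuotientGroup.mk'_surjective N)
  set L := N ⊔ C with hL
  have hCL : C ≤ L := le_sup_right
  have hLK : L ≤ K := sup_le hNK hCK
  -- `C.relIndex L` divides `Nat.card N`
  have e1 : C.relIndex L * Nat.card C = Nat.card L := by
    have := (C.subgroupOf L).index_mul_card
    rwa [Nat.card_congr (subgroupOfEquivOfLe hCL).toEquiv] at this
  have e3 : N.relIndex L = N.relIndex C := by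
    rw [hL, sup_comm, Subgroup.relIndex_sup_right]
  have e2' : N.relIndex L * Nat.card N = Nat.card L := by
    have := (N.subgroupOf L).index_mul_card
    rwa [Nat.card_congr (subgroupOfEquivOfLe (le_sup_left : N ≤ L)).toEquiv] at this
  have e2 : N.relIndex C * Nat.card N = Nat.card L := by rw [← e3]; exact e2'
  have e4 : N.relIndex C * Nat.card (N.subgroupOf C) = Nat.card C :=
    (N.subgroupOf C).index_mul_card
  have hr0 : N.relIndex C ≠ 0 := Subgroup.index_ne_zero_of_finite
  have hdvdN : C.relIndex L ∣ Nat.card N := by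
    refine ⟨Nat.card (N.subgroupOf C), ?_⟩
    have : N.relIndex C * Nat.card N = N.relIndex C * (C.relIndex L * Nat.card (N.subgroupOf C)) := by
      rw [e2, ← e1, ← e4]; ring
    exact Nat.eq_of_mul_eq_mul_left (Nat.pos_of_ne_zero hr0) this
  have hne1 : C.relIndex L ≠ 1 := by
    intro h1
    have hLC : L ≤ C := Subgroup.relIndex_eq_one.mp h1
    refine hx ?_
    intro n hn
    have : n ∈ C := hLC (le_sup_left (α := Subgroup G) hn)
    rw [hC, mem_centralizer_singleton_iff] at this
    exact this
  have ha0 : C.relIndex L ≠ 0 := Subgroup.index_ne_zero_of_finite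
  obtain ⟨p, hp, hpa⟩ := Nat.exists_prime_and_dvd hne1
  have hpπ : p ∈ π := hπN p hp (hpa.trans hdvdN)
  have haK : C.relIndex L ∣ C.relIndex K :=
    ⟨L.relIndex K, (Subgroup.relIndex_mul_relIndex C L K hCL hLK).symm⟩
  have hrel0 : C.relIndex K ≠ 0 := Subgroup.index_ne_zero_of_finite
  have hKi0 : K.index ≠ 0 := Subgroup.index_ne_zero_of_finite
  have hCidx : C.relIndex K * K.index = C.index := Subgroup.relIndex_mul_index hCK
  calc piExp π (Subgroup.centralizer {(x : G ⧸ N)}).index + 1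
      = piExp π K.index + 1 := by rw [hKind]
    _ ≤ piExp π K.index + piExp π (C.relIndex K) :=
        Nat.add_le_add_left (one_le_piExp π hp hpπ (hpa.trans haK) hrel0) _
    _ = piExp π (C.relIndex K * K.index) := by rw [piExp_mul π hrel0 hKi0, Nat.add_comm]
    _ = piExp π C.index := by rw [hCidx]

theorem epsPi_quotient_le {G : Type*} [Group G] [Finite G] (π : Finset ℕ)
    (N : Subgroup G) [N.Normal] :
    epsPi π (G ⧸ N) ≤ epsPi π G ∧
      (N ≠ ⊤ → IsPiNumber π (Nat.card N) →
        Subgroup.centralizer (N : Set G) ≤ N → epsPi π (G ⧸ N) < epsPi π G) := by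
  have hbddG : BddAbove {k | ∃ x : G, piExp π (Subgroup.centralizer {x}).index = k} :=
    Set.Finite.bddAbove (Set.finite_range fun x : G => piExp π (Subgroup.centralizer {x}).index)
  have hbddQ : BddAbove {k | ∃ x : G ⧸ N, piExp π (Subgroup.centralizer {x}).index = k} :=
    Set.Finite.bddAbove
      (Set.finite_range fun x : G ⧸ N => piExp π (Subgroup.centralizer {x}).index)
  have hneQ : {k | ∃ x : G ⧸ N, piExp π (Subgroup.centralizer {x}).index = k}.Nonempty :=
    ⟨_, 1, rfl⟩
  have hle : ∀ x : G, (Subgroup.centralizer {(x : G ⧸ N)}).index ∣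
      (Subgroup.centralizer {x}).index := by
    intro x
    have hCK : Subgroup.centralizer {x} ≤
        (Subgroup.centralizer {(x : G ⧸ N)}).comap (QuotientGroup.mk' N) := by
      intro g hg
      rw [Subgroup.mem_centralizer_singleton_iff] at hg
      rw [Subgroup.mem_comap, Subgroup.mem_centralizer_singleton_iff]
      have : ((g * x : G) : G ⧸ N) = ((x * g : G) : G ⧸ N) := by rw [hg]
      simpa using this
    have := Subgroup.index_dvd_of_le hCK
    rwa [Subgroup.index_comap_of_surjective _ (QuotientGroup.mk'_surjective N)] at this
  constructor
  · refine csSup_le hneQ ?_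
    rintro k ⟨xb, rfl⟩
    obtain ⟨x, rfl⟩ := QuotientGroup.mk_surjective xb
    refine le_trans (piExp_le_of_dvd π (hle x) Subgroup.index_ne_zero_of_finite) ?_
    exact le_csSup hbddG ⟨x, rfl⟩
  · intro hNtop hπN hCN
    obtain ⟨xb, hxb⟩ := Nat.sSup_mem hneQ hbddQ
    obtain ⟨x, rfl⟩ := QuotientGroup.mk_surjective xb
    by_cases hxc : x ∈ Subgroup.centralizer (N : Set G)
    · -- then x ∈ N, so the max in the quotient is 0
      have hx1 : ((x : G) : G ⧸ N) = 1 := (QuotientGroup.eq_one_iff x).mpr (hCN hxc)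
      have he0 : epsPi π (G ⧸ N) = 0 := by
        rw [epsPi, ← hxb, hx1]
        have : Subgroup.centralizer {(1 : G ⧸ N)} = ⊤ := by
          ext g; simp [Subgroup.mem_centralizer_singleton_iff]
        rw [this, Subgroup.index_top]
        simp [piExp]
      rw [he0]
      obtain ⟨y, hy⟩ : ∃ y : G, y ∉ N := by
        by_contra h
        push_neg at h
        exact hNtop ((Subgroup.eq_top_iff' N).mpr h)
      have hyc : y ∉ Subgroup.centralizer (N : Set G) := fun h => hy (hCN h)
      have hkey := key_step π N hπN hyc
      have : 1 ≤ piExp π (Subgroup.centralizer {y}).index := le_trans (Nat.le_add_left 1 _) hkey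
      calc 0 < 1 := Nat.one_pos
        _ ≤ piExp π (Subgroup.centralizer {y}).index := this
        _ ≤ epsPi π G := le_csSup hbddG ⟨y, rfl⟩
    · have hkey := key_step π N hπN hxc
      calc epsPi π (G ⧸ N) = piExp π (Subgroup.centralizer {((x : G) : G ⧸ N)}).index := hxb.symm
        _ < piExp π (Subgroup.centralizer {(x : G)}).index := Nat.lt_of_succ_le hkey
        _ ≤ epsPi π G := le_csSup hbddG ⟨x, rfl⟩
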